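/- arXiv:1607.05870 — 4 statements merged into one kernel-verified Lean document; each statement's English description precedes it below -/
import Mathlib

section
/- Let A₁, ..., Aₙ be pairwise commuting self-adjoint operators on a complex Hilbert space with each Aᵢ² = 1 and with A₁⋯Aₙ = (-1)^b·1. Fix i and α ∈ {-1,+1}. Then (1 + α·Aᵢ)/2 + ∑_{β : ∏ⱼβ(j)=(-1)^b, β(i)=-α} ∏ⱼ (1 + β(j)·Aⱼ)/2 = 1. -/
private lemma prod_smul_aux {A : Type*} [CommRing A] [Algebra ℂ A] {ι : Type*}
    (s : Finset ι) (c : ι → ℂ) (f : ι → A) :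
    ∏ j ∈ s, c j • f j = (∏ j ∈ s, c j) • ∏ j ∈ s, f j := by
  induction s using Finset.cons_induction_on with
  | empty => simp
  | cons _ _ hj ih =>
    rw [Finset.prod_cons, Finset.prod_cons, Finset.prod_cons, ih, smul_mul_smul_comm]

private lemma partition_aux {A : Type*} [CommRing A] [Algebra ℂ A]
    {n : ℕ} (a : Fin n → A) (b : ℕ)
    (hsq : ∀ j, a j * a j = 1)
    (hprod : ∏ j, a j = ((-1 : ℂ) ^ b) • 1)
    (i : Fin n) (α : Bool) :
    (2 : ℂ)⁻¹ • (1 + (if α then (1 : ℂ) else -1) • a i) +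
      ∑ β ∈ Finset.univ.filter
          (fun β : Fin n → Bool =>
            (∏ j, (if β j then (1 : ℂ) else -1)) = (-1 : ℂ) ^ b ∧ β i = !α),
        ∏ j, (2 : ℂ)⁻¹ • (1 + (if β j then (1 : ℂ) else -1) • a j) = 1 := by
  set φ := algebraMap ℂ A with hφ
  have h2 : φ 2⁻¹ * 2 = 1 := by
    rw [show (2 : A) = φ 2 from (map_ofNat φ 2).symm, ← map_mul,
      inv_mul_cancel₀ two_ne_zero, map_one]
  set q : Fin n → Bool → A := fun j s => (2 : ℂ)⁻¹ • (1 + (if s then (1 : ℂ) else -1) • a j)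
    with hq
  have hqt : ∀ j, q j true = φ 2⁻¹ * (1 + a j) := by
    intro j; simp [hq, Algebra.smul_def, hφ]
  have hqf : ∀ j, q j false = φ 2⁻¹ * (1 - a j) := by
    intro j; simp [hq, Algebra.smul_def, sub_eq_add_neg, hφ]
  have hq1 : ∀ j, q j true + q j false = 1 := by
    intro j; rw [hqt, hqf]; linear_combination h2
  have hidem : ∀ j s, q j s * q j s = q j s := by
    intro j s
    cases s
    · rw [hqf]; linear_combination (φ 2⁻¹)^2 * hsq j + (φ 2⁻¹ * (1 - a j)) * h2
    · rw [hqt]; linear_combination (φ 2⁻¹)^2 * hsq j + (φ 2⁻¹ * (1 + a j)) * h2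
  have horth : ∀ j s, q j s * q j (!s) = 0 := by
    intro j s
    cases s
    · rw [hqf, Bool.not_false, hqt]; linear_combination (-(φ 2⁻¹)^2) * hsq j
    · rw [hqt, Bool.not_true, hqf]; linear_combination (-(φ 2⁻¹)^2) * hsq j
  have hmul_a : ∀ j s, q j s * a j = (if s then (1 : ℂ) else -1) • q j s := by
    intro j s
    cases s
    · rw [hqf]
      simp only [Bool.false_eq_true, if_false, neg_smul, one_smul]
      linear_combination (-(φ 2⁻¹)) * hsq j
    · rw [hqt]
      simp only [if_true, one_smul]
      linear_combination (φ 2⁻¹) * hsq j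
  -- full partition of unity over all sign functions
  have hfull : ∑ β : Fin n → Bool, ∏ j, q j (β j) = 1 := by
    rw [show (Finset.univ : Finset (Fin n → Bool)) = Fintype.piFinset (fun _ => Finset.univ)
      from (Fintype.piFinset_univ).symm, ← Finset.prod_univ_sum]
    simp [Fintype.sum_bool, hq1]
  -- wrong parity implies zero
  have hvan : ∀ β : Fin n → Bool,
      (∏ j, (if β j then (1 : ℂ) else -1)) ≠ (-1 : ℂ) ^ b →
      ∏ j, q j (β j) = 0 := by
    intro β hne
    set c : ℂ := ∏ j, (if β j then (1 : ℂ) else -1) with hc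
    set P : A := ∏ j, q j (β j) with hP
    have h1 : P * ∏ j, a j = c • P := by
      rw [hP, hc, ← Finset.prod_mul_distrib, ← prod_smul_aux]
      exact Finset.prod_congr rfl fun j _ => hmul_a j (β j)
    rw [hprod, mul_smul_comm, mul_one] at h1
    have hd : ((-1 : ℂ) ^ b - c) ≠ 0 := sub_ne_zero.mpr (Ne.symm hne)
    have h0 : ((-1 : ℂ) ^ b - c) • P = 0 := by rw [sub_smul, h1, sub_self]
    calc P = (((-1 : ℂ) ^ b - c)⁻¹ * ((-1 : ℂ) ^ b - c)) • P := by
            rw [inv_mul_cancel₀ hd, one_smul]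
      _ = ((-1 : ℂ) ^ b - c)⁻¹ • (((-1 : ℂ) ^ b - c) • P) := by rw [mul_smul]
      _ = 0 := by rw [h0, smul_zero]
  -- sum over β with β i = c equals q i c
  have hhalf : ∀ c : Bool,
      ∑ β ∈ Finset.univ.filter (fun β : Fin n → Bool => β i = c), ∏ j, q j (β j) = q i c := by
    intro c
    have key : ∀ β : Fin n → Bool,
        q i c * ∏ j, q j (β j) = if β i = c then ∏ j, q j (β j) else 0 := by
      intro β
      rw [← Finset.mul_prod_erase Finset.univ _ (Finset.mem_univ i), ← mul_assoc]
      by_cases hβ : β i = c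
      · rw [if_pos hβ, hβ, hidem]
      · rw [if_neg hβ]
        have : β i = !c := by cases c <;> cases hβi : β i <;> simp_all
        rw [this, horth, zero_mul]
    calc ∑ β ∈ Finset.univ.filter (fun β : Fin n → Bool => β i = c), ∏ j, q j (β j)
        = ∑ β : Fin n → Bool, if β i = c then ∏ j, q j (β j) else 0 := by
          rw [Finset.sum_filter]
      _ = ∑ β : Fin n → Bool, q i c * ∏ j, q j (β j) := by
          exact Finset.sum_congr rfl fun β _ => (key β).symm
      _ = q i c * ∑ β : Fin n → Bool, ∏ j, q j (β j) := by rw [Finset.mul_sum]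
      _ = q i c := by rw [hfull, mul_one]
  -- drop the parity condition in the filtered sum
  have hdrop :
      ∑ β ∈ Finset.univ.filter
          (fun β : Fin n → Bool =>
            (∏ j, (if β j then (1 : ℂ) else -1)) = (-1 : ℂ) ^ b ∧ β i = !α),
        ∏ j, q j (β j)
      = ∑ β ∈ Finset.univ.filter (fun β : Fin n → Bool => β i = !α), ∏ j, q j (β j) := by
    apply Finset.sum_subset
    · intro β hβ
      simp only [Finset.mem_filter, Finset.mem_univ, true_and] at hβ ⊢
      exact hβ.2
    · intro β hβ1 hβ2
      simp only [Finset.mem_filter, Finset.mem_univ, true_and] at hβ1 hβ2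
      exact hvan β (fun hp => hβ2 ⟨hp, hβ1⟩)
  show q i α + _ = 1
  rw [hdrop, hhalf]
  cases α
  · rw [Bool.not_false, add_comm]; exact hq1 i
  · rw [Bool.not_true]; exact hq1 i

set_option synthInstance.maxHeartbeats 1000000 in
set_option maxHeartbeats 1000000 in
open ContinuousLinearMap in
/-- Partition-of-unity relation for the measurement-protocol hyperedges: for pairwise
commuting self-adjoint involutions `A j` with `A 1 ⋯ A n = (-1)^b • 1`, for fixed `i` and a
sign `α`, the projection `(1 + α • A i)/2` together with the projections `P_β` over all sign
functions `β` of correct parity `∏ j, β j = (-1)^b` with `β i = -α` sums to the identity.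
Signs are encoded by `Bool` with `true ↦ +1`, `false ↦ -1`, so `β i = -α` reads `β i = !α`. -/
theorem measurement_protocol_partition_of_unity
    {H : Type*} [NormedAddCommGroup H] [InnerProductSpace ℂ H] [CompleteSpace H]
    {n : ℕ} (A : Fin n → (H →L[ℂ] H)) (b : ℕ) (hb : b = 0 ∨ b = 1)
    (hsa : ∀ j, adjoint (A j) = A j)
    (hsq : ∀ j, A j * A j = 1)
    (hcomm : ∀ j k, A j * A k = A k * A j)
    (hprod : ((List.finRange n).map A).prod = ((-1 : ℂ) ^ b) • 1)
    (i : Fin n) (α : Bool) :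
    (2 : ℂ)⁻¹ • (1 + (if α then (1 : ℂ) else -1) • A i) +
      ∑ β ∈ Finset.univ.filter
          (fun β : Fin n → Bool =>
            (∏ j, (if β j then (1 : ℂ) else -1)) = (-1 : ℂ) ^ b ∧ β i = !α),
        ((List.finRange n).map
            (fun j => (2 : ℂ)⁻¹ • (1 + (if β j then (1 : ℂ) else -1) • A j))).prod = 1 := by
  letI T := Algebra.adjoin ℂ (Set.range A)
  letI : CommRing T := Algebra.adjoinCommRingOfComm ℂ (by
    rintro x ⟨j, rfl⟩ y ⟨k, rfl⟩; exact hcomm j k)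
  set a : Fin n → T := fun j => ⟨A j, Algebra.subset_adjoin ⟨j, rfl⟩⟩ with ha
  have hsq' : ∀ j, a j * a j = 1 := by
    intro j; exact Subtype.ext (by simpa using hsq j)
  have hprod' : ∏ j, a j = ((-1 : ℂ) ^ b) • 1 := by
    apply Subtype.ext
    rw [Fin.prod_univ_def, SubmonoidClass.coe_list_prod]
    simp only [List.map_map]
    have : (Subtype.val ∘ a) = A := rfl
    rw [this, hprod]
    simp
  have key := partition_aux a b hsq' hprod' i α
  have key2 := congrArg (Subtype.val) key
  simpa [Fin.prod_univ_def, SubmonoidClass.coe_list_prod, AddSubmonoidClass.coe_finset_sum,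
    List.map_map, Function.comp_def, apply_ite (Subtype.val : T → (H →L[ℂ] H))] using key2
end

section
/- On the complex Hilbert space ℂ² ⊗ ℂ² (equivalently ℂ⁴), there exist nine self-adjoint unitary operators A_{rc} (r, c ∈ {1,2,3}) with A_{rc}² = 1, such that operators in the same row commute and operators in the same column commute, each row product A_{r1}A_{r2}A_{r3} = 1, each of the first two column products A_{1c}A_{2c}A_{3c} = 1 for c ∈ {1,2}, and the third column product A_{13}A_{23}A_{33} = -1. -/
namespace MerminPeres

/-- The nine operators of the Mermin–Peres magic square as integer matrices
(tensor products of Pauli matrices, in the order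
`Z⊗I, I⊗Z, Z⊗Z; I⊗X, X⊗I, X⊗X; Z⊗X, X⊗Z, Y⊗Y`). -/
def Mz : Fin 3 → Fin 3 → Matrix (Fin 4) (Fin 4) ℤ
| 0, 0 => !![1,0,0,0; 0,1,0,0; 0,0,-1,0; 0,0,0,-1]
| 0, 1 => !![1,0,0,0; 0,-1,0,0; 0,0,1,0; 0,0,0,-1]
| 0, 2 => !![1,0,0,0; 0,-1,0,0; 0,0,-1,0; 0,0,0,1]
| 1, 0 => !![0,1,0,0; 1,0,0,0; 0,0,0,1; 0,0,1,0]
| 1, 1 => !![0,0,1,0; 0,0,0,1; 1,0,0,0; 0,1,0,0]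
| 1, 2 => !![0,0,0,1; 0,0,1,0; 0,1,0,0; 1,0,0,0]
| 2, 0 => !![0,1,0,0; 1,0,0,0; 0,0,0,-1; 0,0,-1,0]
| 2, 1 => !![0,0,1,0; 0,0,0,-1; 1,0,0,0; 0,-1,0,0]
| 2, 2 => !![0,0,0,-1; 0,0,1,0; 0,1,0,0; -1,0,0,0]

lemma Mz_transpose : ∀ r c, Matrix.transpose (Mz r c) = Mz r c := by decide
lemma Mz_sq : ∀ r c, Mz r c * Mz r c = 1 := by decide
lemma Mz_row_comm : ∀ r c c', Mz r c * Mz r c' = Mz r c' * Mz r c := by decide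
lemma Mz_col_comm : ∀ r r' c, Mz r c * Mz r' c = Mz r' c * Mz r c := by decide
lemma Mz_row_prod : ∀ r, Mz r 0 * Mz r 1 * Mz r 2 = 1 := by decide
lemma Mz_col_prod0 : Mz 0 0 * Mz 1 0 * Mz 2 0 = 1 := by decide
lemma Mz_col_prod1 : Mz 0 1 * Mz 1 1 * Mz 2 1 = 1 := by decide
lemma Mz_col_prod2 : Mz 0 2 * Mz 1 2 * Mz 2 2 = -1 := by decide

/-- The ring hom from integer matrices to complex matrices. -/
noncomputable def f : Matrix (Fin 4) (Fin 4) ℤ →+* Matrix (Fin 4) (Fin 4) ℂ :=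
  (Int.castRingHom ℂ).mapMatrix

lemma star_f (N : Matrix (Fin 4) (Fin 4) ℤ) (hN : Matrix.transpose N = N) :
    star (f N) = f N := by
  have hsemi : Function.Semiconj (fun z : ℤ => (z : ℂ)) star star := by
    intro a
    simp
  have h1 : Matrix.conjTranspose N = Matrix.transpose N := by
    ext i j
    simp [Matrix.conjTranspose_apply, Matrix.transpose_apply]
  calc star (f N) = Matrix.conjTranspose (N.map fun z : ℤ => (z : ℂ)) := rfl
    _ = (Matrix.conjTranspose N).map (fun z : ℤ => (z : ℂ)) :=
        (Matrix.conjTranspose_map _ hsemi).symm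
    _ = f N := by rw [h1, hN]; rfl

end MerminPeres

open ContinuousLinearMap in
/-- The Mermin–Peres magic square: on the 4-dimensional complex Hilbert space `ℂ² ⊗ ℂ² ≅ ℂ⁴`
there exist nine self-adjoint unitaries `A r c` (`r, c ∈ {0,1,2}`) squaring to `1`, commuting
along rows and columns, with all three row products and the first two column products equal
to `1` and the third column product equal to `-1`. -/
theorem mermin_peres_magic_square :
    ∃ A : Fin 3 → Fin 3 → (EuclideanSpace ℂ (Fin 4) →L[ℂ] EuclideanSpace ℂ (Fin 4)),
      (∀ r c, adjoint (A r c) = A r c) ∧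
      (∀ r c, A r c * A r c = 1) ∧
      (∀ r c c', A r c * A r c' = A r c' * A r c) ∧
      (∀ r r' c, A r c * A r' c = A r' c * A r c) ∧
      (∀ r, A r 0 * A r 1 * A r 2 = 1) ∧
      (∀ c, c ≠ 2 → A 0 c * A 1 c * A 2 c = 1) ∧
      A 0 2 * A 1 2 * A 2 2 = -1 := by
  refine ⟨fun r c =>
      Matrix.toEuclideanCLM (𝕜 := ℂ) (MerminPeres.f (MerminPeres.Mz r c)),
    ?_, ?_, ?_, ?_, ?_, ?_, ?_⟩
  · intro r c
    rw [← ContinuousLinearMap.star_eq_adjoint, ← map_star,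
      MerminPeres.star_f _ (MerminPeres.Mz_transpose r c)]
  · intro r c
    rw [← map_mul, ← map_mul, MerminPeres.Mz_sq, map_one, map_one]
  · intro r c c'
    rw [← map_mul, ← map_mul, ← map_mul, ← map_mul, MerminPeres.Mz_row_comm]
  · intro r r' c
    rw [← map_mul, ← map_mul, ← map_mul, ← map_mul, MerminPeres.Mz_col_comm]
  · intro r
    rw [← map_mul, ← map_mul, ← map_mul, ← map_mul, MerminPeres.Mz_row_prod,
      map_one, map_one]
  · intro c hc
    match c, hc with
    | 0, _ =>
      rw [← map_mul, ← map_mul, ← map_mul, ← map_mul, MerminPeres.Mz_col_prod0,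
        map_one, map_one]
    | 1, _ =>
      rw [← map_mul, ← map_mul, ← map_mul, ← map_mul, MerminPeres.Mz_col_prod1,
        map_one, map_one]
    | 2, h => exact absurd rfl h
  · rw [← map_mul, ← map_mul, ← map_mul, ← map_mul, MerminPeres.Mz_col_prod2,
      map_neg, map_neg, map_one, map_one]
end

section
/- If a linear system Mx = b over ℤ₂ has a quantum solution A₁,...,Aₙ on some Hilbert space H, and all the operators Aᵢ pairwise commute (not just those within common equations), then the linear system has a classical solution x ∈ ℤ₂ⁿ, provided H ≠ 0. -/
private lemma zmod2_val_cases (a : ZMod 2) : a = 0 ∨ a = 1 := by revert a; decide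

private lemma chi_add (a c : ZMod 2) :
    ((-1 : ℂ) ^ (a + c).val) = (-1 : ℂ) ^ a.val * (-1 : ℂ) ^ c.val := by
  rcases zmod2_val_cases a with rfl | rfl <;> rcases zmod2_val_cases c with rfl | rfl <;>
    norm_num [show ((0 : ZMod 2)).val = 0 from rfl, show ((1 : ZMod 2)).val = 1 from rfl,
      show ((1 + 1 : ZMod 2)).val = 0 from rfl, show ((2 : ZMod 2)).val = 0 by decide, show ((0 + 1 : ZMod 2)).val = 1 from rfl,
      show ((1 + 0 : ZMod 2)).val = 1 from rfl, show ((0 + 0 : ZMod 2)).val = 0 from rfl]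

private lemma chi_inj (a c : ZMod 2) (h : ((-1 : ℂ) ^ a.val) = (-1 : ℂ) ^ c.val) :
    a = c := by
  rcases zmod2_val_cases a with rfl | rfl <;> rcases zmod2_val_cases c with rfl | rfl <;>
    first
      | rfl
      | (exfalso; revert h;
          norm_num [show ((0 : ZMod 2)).val = 0 from rfl, show ((1 : ZMod 2)).val = 1 from rfl])

private lemma common_eigenvector {H : Type*} [NormedAddCommGroup H] [InnerProductSpace ℂ H]
    [Nontrivial H] {n : ℕ} (A : Fin n → (H →L[ℂ] H))
    (hinv : ∀ i, A i * A i = 1) (hcomm : ∀ i j, A i * A j = A j * A i)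
    (l : List (Fin n)) :
    ∃ (x : Fin n → ZMod 2) (w : H), w ≠ 0 ∧
      ∀ i ∈ l, A i w = ((-1 : ℂ) ^ (x i).val) • w := by
  induction l with
  | nil =>
    obtain ⟨w, hw⟩ := exists_ne (0 : H)
    exact ⟨0, w, hw, by simp⟩
  | cons i t ih =>
    obtain ⟨x, w, hw, hx⟩ := ih
    by_cases hu : w + A i w = 0
    · have hAiw : A i w = -w := by linear_combination (norm := abel) hu
      refine ⟨Function.update x i 1, w, hw, ?_⟩
      intro j hj
      rcases eq_or_ne j i with rfl | hne
      · simp [Function.update_self, hAiw, show ((1 : ZMod 2)).val = 1 from rfl]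
      · rw [Function.update_of_ne hne]
        exact hx j ((List.mem_cons.mp hj).resolve_left hne)
    · refine ⟨Function.update x i 0, w + A i w, hu, ?_⟩
      have hAiu : A i (w + A i w) = w + A i w := by
        have h2 : A i (A i w) = w := by
          have := congrArg (fun f => f w) (hinv i)
          simpa [ContinuousLinearMap.mul_apply] using this
        simp [map_add, h2, add_comm]
      intro j hj
      rcases eq_or_ne j i with rfl | hne
      · simpa [Function.update_self, show ((0 : ZMod 2)).val = 0 from rfl] using hAiu
      · rw [Function.update_of_ne hne]
        have hjw := hx j ((List.mem_cons.mp hj).resolve_left hne)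
        have hji : A j (A i w) = A i (A j w) := by
          have := congrArg (fun f => f w) (hcomm j i)
          simpa [ContinuousLinearMap.mul_apply] using this
        rw [map_add, hjw, hji, hjw, map_smul, smul_add]

private lemma prod_apply_eig {H : Type*} [NormedAddCommGroup H] [InnerProductSpace ℂ H]
    {n : ℕ} (A : Fin n → (H →L[ℂ] H)) (c : Fin n → ℂ) (w : H)
    (l : List (Fin n)) (h : ∀ i ∈ l, A i w = c i • w) :
    (l.map A).prod w = (l.map c).prod • w := by
  induction l with
  | nil => simp
  | cons i t ih =>
    simp only [List.map_cons, List.prod_cons, ContinuousLinearMap.mul_apply]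
    rw [ih (fun j hj => h j (List.mem_cons_of_mem i hj)),
      map_smul, h i (List.mem_cons_self), smul_smul, mul_comm]

private lemma list_prod_chi {n : ℕ} (x : Fin n → ZMod 2) (l : List (Fin n)) :
    (l.map (fun i => ((-1 : ℂ) ^ (x i).val))).prod
      = (-1 : ℂ) ^ ((l.map x).sum).val := by
  induction l with
  | nil => simp [show ((0 : ZMod 2)).val = 0 from rfl]
  | cons i t ih => simp [ih, chi_add]

private lemma filter_map_sum {α : Type*} {N : Type*} [AddCommMonoid N]
    (p : α → Bool) (x : α → N) (L : List α) :
    ((L.filter p).map x).sum = (L.map (fun i => if p i then x i else 0)).sum := by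
  induction L with
  | nil => simp
  | cons a t ih => by_cases h : p a <;> simp [List.filter_cons, h, ih]

private lemma zmod2_mul_ite (a y : ZMod 2) : a * y = if a = 1 then y else 0 := by
  rcases zmod2_val_cases a with rfl | rfl <;> simp

open ContinuousLinearMap in
/-- A quantum solution of the linear system `M x = b` over `ℤ₂` on the Hilbert space `H`. -/
def IsQuantumSolution {H : Type*} [NormedAddCommGroup H] [InnerProductSpace ℂ H]
    [CompleteSpace H] {m n : ℕ} (M : Fin m → Fin n → ZMod 2) (b : Fin m → ZMod 2)
    (A : Fin n → (H →L[ℂ] H)) : Prop :=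
  (∀ i, adjoint (A i) = A i) ∧
  (∀ i, A i * A i = 1) ∧
  (∀ r i j, M r i = 1 → M r j = 1 → A i * A j = A j * A i) ∧
  (∀ r, (((List.finRange n).filter (fun i => M r i = 1)).map A).prod
          = ((-1 : ℂ) ^ (b r).val) • 1)

/-- If a linear system over `ℤ₂` has a quantum solution by pairwise commuting operators on a
nonzero Hilbert space, then it has a classical solution. -/
theorem commuting_quantum_solution_gives_classical_solution
    {H : Type*} [NormedAddCommGroup H] [InnerProductSpace ℂ H] [CompleteSpace H]
    [Nontrivial H] {m n : ℕ} (M : Fin m → Fin n → ZMod 2) (b : Fin m → ZMod 2)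
    (A : Fin n → (H →L[ℂ] H)) (hA : IsQuantumSolution M b A)
    (hcomm : ∀ i j, A i * A j = A j * A i) :
    ∃ x : Fin n → ZMod 2, ∀ r, ∑ i, M r i * x i = b r := by
  obtain ⟨-, hinv, -, hprod⟩ := hA
  obtain ⟨x, w, hw, hx⟩ := common_eigenvector A hinv hcomm (List.finRange n)
  refine ⟨x, fun r => ?_⟩
  set l : List (Fin n) := (List.finRange n).filter (fun i => M r i = 1) with hl
  have h1 : (l.map A).prod w = ((-1 : ℂ) ^ ((l.map x).sum).val) • w := by
    rw [prod_apply_eig A (fun i => ((-1 : ℂ) ^ (x i).val)) w l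
      (fun i _ => hx i (List.mem_finRange i)), list_prod_chi]
  have h2 : (l.map A).prod w = ((-1 : ℂ) ^ (b r).val) • w := by
    rw [hl, hprod r]; simp
  have h3 : ((-1 : ℂ) ^ ((l.map x).sum).val) = (-1 : ℂ) ^ (b r).val := by
    have heq := h1.symm.trans h2
    have hz : (((-1 : ℂ) ^ ((l.map x).sum).val) - (-1 : ℂ) ^ (b r).val) • w = 0 := by
      rw [sub_smul, heq, sub_self]
    rcases smul_eq_zero.mp hz with h | h
    · exact sub_eq_zero.mp h
    · exact absurd h hw
  have h4 : (l.map x).sum = b r := chi_inj _ _ h3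
  rw [← h4, hl, filter_map_sum, ← Fin.sum_univ_def]
  exact Finset.sum_congr rfl (fun i _ => by rw [zmod2_mul_ite]; simp)
end

section
/- Let H = (V, E) be a hypergraph (V finite, E a set of subsets of V covering V). If H has a quantum representation on some nonzero complex Hilbert space, and additionally all assigned projections pairwise commute, then H admits a {0,1}-valued representation: a function p : V → {0,1} with ∑_{v ∈ e} p(v) = 1 for every e ∈ E. -/
open ContinuousLinearMap in
/-- If a hypergraph `(V, E)` (with `E` covering `V`) has a quantum representation by
pairwise commuting projections on a nonzero complex Hilbert space, then it has a classical
`{0,1}`-valued representation. -/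
theorem commuting_quantum_representation_gives_classical
    {V : Type*} [Fintype V] [DecidableEq V] (E : Finset (Finset V))
    (hcover : ∀ v : V, ∃ e ∈ E, v ∈ e)
    (𝓗 : Type*) [NormedAddCommGroup 𝓗] [InnerProductSpace ℂ 𝓗] [CompleteSpace 𝓗]
    [Nontrivial 𝓗]
    (P : V → (𝓗 →L[ℂ] 𝓗))
    (hsa : ∀ v, adjoint (P v) = P v)
    (hidem : ∀ v, P v * P v = P v)
    (hedge : ∀ e ∈ E, ∑ v ∈ e, P v = 1)
    (hcomm : ∀ v w, P v * P w = P w * P v) :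
    ∃ p : V → ℕ, (∀ v, p v = 0 ∨ p v = 1) ∧ ∀ e ∈ E, ∑ v ∈ e, p v = 1 := by
  have key : ∀ s : Finset V, ∃ x : 𝓗, x ≠ 0 ∧ ∃ p : V → ℕ,
      (∀ v, p v = 0 ∨ p v = 1) ∧ ∀ v ∈ s, P v x = (p v : ℂ) • x := by
    intro s
    induction s using Finset.induction_on with
    | empty =>
      obtain ⟨x, hx⟩ := exists_ne (0 : 𝓗)
      exact ⟨x, hx, fun _ => 0, fun _ => Or.inl rfl, fun v hv => absurd hv (by simp)⟩
    | @insert v s hvs ih =>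
      obtain ⟨x, hx, p, hp01, hpx⟩ := ih
      by_cases h : P v x = 0
      · refine ⟨x, hx, Function.update p v 0, ?_, ?_⟩
        · intro w
          by_cases hw : w = v
          · subst hw; simp
          · simpa [Function.update_of_ne hw] using hp01 w
        · intro w hw
          rcases Finset.mem_insert.mp hw with rfl | hws
          · simp [h]
          · have hwv : w ≠ v := fun hh => hvs (hh ▸ hws)
            simpa [Function.update_of_ne hwv] using hpx w hws
      · refine ⟨P v x, h, Function.update p v 1, ?_, ?_⟩
        · intro w
          by_cases hw : w = v
          · subst hw; simp
          · simpa [Function.update_of_ne hw] using hp01 w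
        · intro w hw
          rcases Finset.mem_insert.mp hw with rfl | hws
          · have : (P w * P w) x = P w x := by rw [hidem]
            simpa using this
          · have hwv : w ≠ v := fun hh => hvs (hh ▸ hws)
            have h1 : P w (P v x) = P v (P w x) := by
              have := congrArg (fun T : 𝓗 →L[ℂ] 𝓗 => T x) (hcomm w v)
              simpa [mul_apply] using this
            rw [Function.update_of_ne hwv, h1, hpx w hws, map_smul]
  obtain ⟨x, hx, p, hp01, hpx⟩ := key Finset.univ
  refine ⟨p, hp01, fun e he => ?_⟩
  have h1 : (∑ v ∈ e, P v) x = (1 : 𝓗 →L[ℂ] 𝓗) x := by rw [hedge e he]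
  have h2 : ((∑ v ∈ e, (p v : ℂ))) • x = (1 : ℂ) • x := by
    rw [Finset.sum_smul, one_smul]
    simpa [hpx] using h1
  have h3 : (∑ v ∈ e, (p v : ℂ)) = 1 := smul_left_injective ℂ hx h2
  have h4 : ((∑ v ∈ e, p v : ℕ) : ℂ) = ((1 : ℕ) : ℂ) := by push_cast; simpa using h3
  exact_mod_cast h4
end
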